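/- In the lexicographic product G·K_m with G connected of order n ≥ 2, if D is a solvable distribution on G of size at most 2m in which every vertex with exactly one pebble is 2-reachable and D(g) < 2m for every g, then the distribution Q on G·K_m defined by Q((g,0)) = 1 if D(g) is odd, Q((g,i)) = 2 for 1 ≤ i ≤ D(g)/2, and 0 otherwise, is a solvable 2-restricted distribution with |Q| = |D|. -/

import Mathlib

open Finset

/-- A single pebbling move: remove two pebbles from `u` and place one on an
adjacent vertex `v`. -/
def PebblingStep {V : Type*} [DecidableEq V] (G : SimpleGraph V) (D D' : V → ℕ) : Prop :=
  ∃ u v, G.Adj u v ∧ 2 ≤ D u ∧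
    D' = Function.update (Function.update D u (D u - 2)) v (D v + 1)

/-- `D'` is obtained from `D` by an executable sequence of pebbling moves. -/
def PebblingReaches {V : Type*} [DecidableEq V] (G : SimpleGraph V) : (V → ℕ) → (V → ℕ) → Prop :=
  Relation.ReflTransGen (PebblingStep G)

/-- A vertex `v` is `k`-reachable under `D`. -/
def KReachable {V : Type*} [DecidableEq V] (G : SimpleGraph V) (D : V → ℕ) (k : ℕ) (v : V) : Prop :=
  ∃ D', PebblingReaches G D D' ∧ k ≤ D' v

/-- A distribution is solvable if every vertex is (1-)reachable. -/
def Solvable {V : Type*} [DecidableEq V] (G : SimpleGraph V) (D : V → ℕ) : Prop :=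
  ∀ v, KReachable G D 1 v

/-- The size of a pebble distribution. -/
def distSize {V : Type*} [Fintype V] (D : V → ℕ) : ℕ := ∑ v, D v

/-- The optimal pebbling number `π*`. -/
noncomputable def optPebbling {V : Type*} [Fintype V] [DecidableEq V] (G : SimpleGraph V) : ℕ :=
  sInf {n | ∃ D : V → ℕ, Solvable G D ∧ distSize D = n}

/-- The `t`-restricted optimal pebbling number `π*_t`. -/
noncomputable def optPebblingRes {V : Type*} [Fintype V] [DecidableEq V]
    (G : SimpleGraph V) (t : ℕ) : ℕ :=
  sInf {n | ∃ D : V → ℕ, (∀ v, D v ≤ t) ∧ Solvable G D ∧ distSize D = n}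

/-- The lexicographic product of two simple graphs. -/
def lexProd {V W : Type*} (G : SimpleGraph V) (H : SimpleGraph W) : SimpleGraph (V × W) where
  Adj a b := G.Adj a.1 b.1 ∨ (a.1 = b.1 ∧ H.Adj a.2 b.2)
  symm := by
    constructor
    rintro a b (h | ⟨h1, h2⟩)
    · exact Or.inl h.symm
    · exact Or.inr ⟨h1.symm, h2.symm⟩
  loopless := by
    constructor
    rintro a (h | ⟨_, h2⟩)
    · exact G.irrefl h
    · exact H.irrefl h2

set_option linter.unusedSectionVars false

section Aux
variable {V : Type*} [Fintype V] [DecidableEq V] {G : SimpleGraph V}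

lemma pebblingStep_size {D D' : V → ℕ} (h : PebblingStep G D D') :
    distSize D' + 1 = distSize D := by
  obtain ⟨u, v, hadj, h2, rfl⟩ := h
  have huv : u ≠ v := hadj.ne
  unfold distSize
  rw [Finset.sum_update_of_mem (Finset.mem_univ v)]
  have hu : u ∈ (Finset.univ : Finset V) \ {v} := by simp [huv]
  rw [Finset.sum_update_of_mem hu]
  have h1 : D v + ∑ x ∈ (Finset.univ : Finset V).erase v, D x = ∑ x, D x :=
    Finset.add_sum_erase _ D (Finset.mem_univ v)
  have h2' : D u + ∑ x ∈ ((Finset.univ : Finset V).erase v).erase u, D x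
      = ∑ x ∈ (Finset.univ : Finset V).erase v, D x := by
    refine Finset.add_sum_erase _ D ?_
    exact Finset.mem_erase.2 ⟨huv, Finset.mem_univ u⟩
  simp only [← Finset.erase_eq] at h1 h2' ⊢
  omega

lemma pebblingReaches_size {D D' : V → ℕ} (h : PebblingReaches G D D') :
    distSize D' ≤ distSize D := by
  induction h with
  | refl => exact le_rfl
  | tail _ hstep ih => have := pebblingStep_size hstep; omega

def PRep {V : Type*} [DecidableEq V] (m : ℕ) (D' : V → ℕ) (Q' : V × Fin m → ℕ) : Prop :=
  (∀ g : V, ∑ j : Fin m, Q' (g, j) = D' g) ∧ (∀ p, Q' p ≤ 2) ∧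
  (∀ g : V, ((univ : Finset (Fin m)).filter (fun j => Q' (g, j) = 1)).card ≤ 1)

lemma pair_exists {m : ℕ} {D' : V → ℕ} {Q' : V × Fin m → ℕ} (hrep : PRep m D' Q')
    {u : V} (h2 : 2 ≤ D' u) : ∃ j, Q' (u, j) = 2 := by
  by_contra h
  push_neg at h
  have hle : ∀ j : Fin m, Q' (u, j) ≤ if Q' (u, j) = 1 then 1 else 0 := by
    intro j; have h1 := hrep.2.1 (u, j); have h2 := h j; split <;> omega
  have hcard : D' u ≤ ((univ : Finset (Fin m)).filter (fun j => Q' (u, j) = 1)).card := by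
    rw [← hrep.1 u]
    calc ∑ j : Fin m, Q' (u, j) ≤ ∑ j : Fin m, (if Q' (u, j) = 1 then 1 else 0) :=
          Finset.sum_le_sum (fun j _ => hle j)
      _ = _ := by simp
  have := hrep.2.2 u
  omega

lemma col_update_ne {m : ℕ} (Q : V × Fin m → ℕ) (p : V × Fin m) (a : ℕ) {g : V}
    (hg : g ≠ p.1) (j : Fin m) : Function.update Q p a (g, j) = Q (g, j) :=
  Function.update_of_ne (fun h => hg (congrArg Prod.fst h)) _ _

lemma col_update_eq {m : ℕ} (Q : V × Fin m → ℕ) (g : V) (k : Fin m) (a : ℕ) :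
    (fun j => Function.update Q (g, k) a (g, j)) = Function.update (fun j => Q (g, j)) k a := by
  funext j
  simp [Function.update_apply, Prod.ext_iff]

lemma sum_update_col {m : ℕ} (f : Fin m → ℕ) (k : Fin m) (a : ℕ) :
    ∑ j : Fin m, Function.update f k a j + f k = ∑ j : Fin m, f j + a := by
  rw [Finset.sum_update_of_mem (Finset.mem_univ k)]
  have h1 : f k + ∑ x ∈ (Finset.univ : Finset (Fin m)).erase k, f x = ∑ x, f x :=
    Finset.add_sum_erase _ f (Finset.mem_univ k)
  simp only [← Finset.erase_eq]
  omega

set_option linter.unusedSectionVars false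

lemma move_rep {m : ℕ} {D₀ : V → ℕ} {Q₀ : V × Fin m → ℕ} (hrep : PRep m D₀ Q₀)
    {u v : V} (huv : u ≠ v) (h2 : 2 ≤ D₀ u) {j k : Fin m} (hj : Q₀ (u, j) = 2)
    (hk1 : Q₀ (v, k) ≤ 1) (hkcase : Q₀ (v, k) = 1 ∨ ∀ k' : Fin m, Q₀ (v, k') ≠ 1) :
    PRep m (Function.update (Function.update D₀ u (D₀ u - 2)) v (D₀ v + 1))
      (Function.update (Function.update Q₀ (u, j) (Q₀ (u, j) - 2)) (v, k) (Q₀ (v, k) + 1)) := by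
  set Qn := Function.update (Function.update Q₀ (u, j) (Q₀ (u, j) - 2)) (v, k) (Q₀ (v, k) + 1)
    with hQndef
  have hpne : ((u, j) : V × Fin m) ≠ (v, k) := fun h => huv (congrArg Prod.fst h)
  have hQ : ∀ p, Qn p = if p = (v, k) then Q₀ (v, k) + 1 else if p = (u, j) then 0 else Q₀ p := by
    intro p
    rw [hQndef, Function.update_apply, Function.update_apply]
    split_ifs <;> omega
  have hD : ∀ g, Function.update (Function.update D₀ u (D₀ u - 2)) v (D₀ v + 1) g
      = if g = v then D₀ v + 1 else if g = u then D₀ u - 2 else D₀ g := by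
    intro g
    rw [Function.update_apply, Function.update_apply]
  refine ⟨?_, ?_, ?_⟩
  · -- column sums
    intro g
    rw [hD]
    by_cases hgv : g = v
    · subst hgv
      rw [if_pos rfl]
      have hcols : (fun j' => Qn (g, j'))
          = Function.update (fun j' => Q₀ (g, j')) k (Q₀ (g, k) + 1) := by
        funext j'
        rw [hQ (g, j'), Function.update_apply]
        by_cases hj'k : j' = k
        · simp [hj'k]
        · have h1 : ((g, j') : V × Fin m) ≠ (g, k) := by simp [hj'k]
          have h2' : ((g, j') : V × Fin m) ≠ (u, j) := by simp [Ne.symm huv]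
          rw [if_neg h1, if_neg h2', if_neg hj'k]
      calc ∑ j' : Fin m, Qn (g, j')
          = ∑ j' : Fin m, Function.update (fun j'' => Q₀ (g, j'')) k (Q₀ (g, k) + 1) j' := by
            rw [← hcols]
        _ = D₀ g + 1 := by
            have hs := sum_update_col (fun j'' => Q₀ (g, j'')) k (Q₀ (g, k) + 1)
            have hc := hrep.1 g
            omega
    · rw [if_neg hgv]
      by_cases hgu : g = u
      · subst hgu
        rw [if_pos rfl]
        have hcols : (fun j' => Qn (g, j'))
            = Function.update (fun j' => Q₀ (g, j')) j 0 := by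
          funext j'
          rw [hQ (g, j'), Function.update_apply]
          have h1 : ((g, j') : V × Fin m) ≠ (v, k) := by simp [hgv]
          rw [if_neg h1]
          by_cases hj'j : j' = j
          · simp [hj'j]
          · have h2' : ((g, j') : V × Fin m) ≠ (g, j) := by simp [hj'j]
            rw [if_neg h2', if_neg hj'j]
        calc ∑ j' : Fin m, Qn (g, j')
            = ∑ j' : Fin m, Function.update (fun j'' => Q₀ (g, j'')) j 0 j' := by rw [← hcols]
          _ = D₀ g - 2 := by
              have hs := sum_update_col (fun j'' => Q₀ (g, j'')) j 0
              have hc := hrep.1 g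
              have hcj : Q₀ (g, j) ≤ Q₀ (g, j) := le_rfl
              -- relate single entry to the column sum
              have hle : Q₀ (g, j) ≤ ∑ j'' : Fin m, Q₀ (g, j'') :=
                Finset.single_le_sum (f := fun j'' : Fin m => Q₀ (g, j'')) (fun _ _ => Nat.zero_le _) (Finset.mem_univ j)
              omega
      · rw [if_neg hgu, ← hrep.1 g]
        refine Finset.sum_congr rfl (fun j' _ => ?_)
        rw [hQ (g, j')]
        have h1 : ((g, j') : V × Fin m) ≠ (v, k) := by simp [hgv]
        have h2' : ((g, j') : V × Fin m) ≠ (u, j) := by simp [hgu]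
        rw [if_neg h1, if_neg h2']
  · -- per-vertex bound
    intro p
    rw [hQ p]
    have := hrep.2.1 p
    split_ifs <;> omega
  · -- singleton counts
    intro g
    by_cases hgv : g = v
    · subst hgv
      rcases hkcase with hks | hknone
      · have hkmem : k ∈ (univ : Finset (Fin m)).filter (fun j' => Q₀ (g, j') = 1) := by
          simp [hks]
        have hsub : ((univ : Finset (Fin m)).filter (fun j' => Qn (g, j') = 1))
            ⊆ ((univ : Finset (Fin m)).filter (fun j' => Q₀ (g, j') = 1)).erase k := by
          intro j' hj'
          rw [Finset.mem_filter, hQ (g, j')] at hj'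
          by_cases hj'k : j' = k
          · exfalso; rw [if_pos (by rw [hj'k])] at hj'; omega
          · have h1 : ((g, j') : V × Fin m) ≠ (g, k) := by simp [hj'k]
            have h2' : ((g, j') : V × Fin m) ≠ (u, j) := by simp [Ne.symm huv]
            rw [if_neg h1, if_neg h2'] at hj'
            exact Finset.mem_erase.2 ⟨hj'k, Finset.mem_filter.2 ⟨Finset.mem_univ _, hj'.2⟩⟩
        have hc1 := Finset.card_le_card hsub
        have hc2 := Finset.card_erase_of_mem hkmem
        have hc3 := hrep.2.2 g
        omega
      · have hsub : ((univ : Finset (Fin m)).filter (fun j' => Qn (g, j') = 1))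
            ⊆ {k} := by
          intro j' hj'
          rw [Finset.mem_filter, hQ (g, j')] at hj'
          by_cases hj'k : j' = k
          · simp [hj'k]
          · exfalso
            have h1 : ((g, j') : V × Fin m) ≠ (g, k) := by simp [hj'k]
            have h2' : ((g, j') : V × Fin m) ≠ (u, j) := by simp [Ne.symm huv]
            rw [if_neg h1, if_neg h2'] at hj'
            exact hknone j' hj'.2
        have := Finset.card_le_card hsub
        simpa using this
    · by_cases hgu : g = u
      · subst hgu
        have hsub : ((univ : Finset (Fin m)).filter (fun j' => Qn (g, j') = 1))
            ⊆ (univ : Finset (Fin m)).filter (fun j' => Q₀ (g, j') = 1) := by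
          intro j' hj'
          rw [Finset.mem_filter, hQ (g, j')] at hj'
          have h1 : ((g, j') : V × Fin m) ≠ (v, k) := by simp [hgv]
          rw [if_neg h1] at hj'
          by_cases hj'j : j' = j
          · exfalso; rw [if_pos (by rw [hj'j])] at hj'; omega
          · have h2' : ((g, j') : V × Fin m) ≠ (g, j) := by simp [hj'j]
            rw [if_neg h2'] at hj'
            exact Finset.mem_filter.2 ⟨Finset.mem_univ _, hj'.2⟩
        have hc1 := Finset.card_le_card hsub
        have hc3 := hrep.2.2 g
        omega
      · have heq : ((univ : Finset (Fin m)).filter (fun j' => Qn (g, j') = 1))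
            = (univ : Finset (Fin m)).filter (fun j' => Q₀ (g, j') = 1) := by
          refine Finset.filter_congr (fun j' _ => ?_)
          rw [hQ (g, j')]
          have h1 : ((g, j') : V × Fin m) ≠ (v, k) := by simp [hgv]
          have h2' : ((g, j') : V × Fin m) ≠ (u, j) := by simp [hgu]
          rw [if_neg h1, if_neg h2']
        rw [heq]
        exact hrep.2.2 g

lemma step_sim {m : ℕ} {G : SimpleGraph V} {D₀ D₁ : V → ℕ} {Q₀ : V × Fin m → ℕ}
    (hrep : PRep m D₀ Q₀) (hsz : distSize D₀ ≤ 2 * m) (hstep : PebblingStep G D₀ D₁) :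
    ∃ Q₁, PebblingStep (lexProd G (⊤ : SimpleGraph (Fin m))) Q₀ Q₁ ∧ PRep m D₁ Q₁ := by
  obtain ⟨u, v, hadj, h2, rfl⟩ := hstep
  have huv : u ≠ v := hadj.ne
  obtain ⟨j, hj⟩ := pair_exists hrep h2
  have hsum2 : D₀ u + D₀ v ≤ distSize D₀ := by
    have hsub : ({u, v} : Finset V) ⊆ univ := Finset.subset_univ _
    calc D₀ u + D₀ v = ∑ x ∈ ({u, v} : Finset V), D₀ x := (Finset.sum_pair huv).symm
      _ ≤ distSize D₀ := Finset.sum_le_sum_of_subset hsub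
  have hex : ∃ k : Fin m, Q₀ (v, k) ≤ 1 := by
    by_contra hno
    push_neg at hno
    have hall : ∀ k : Fin m, Q₀ (v, k) = 2 := fun k => le_antisymm (hrep.2.1 _) (hno k)
    have : D₀ v = 2 * m := by
      rw [← hrep.1 v]
      calc ∑ j : Fin m, Q₀ (v, j) = ∑ _j : Fin m, 2 := Finset.sum_congr rfl (fun k _ => hall k)
        _ = 2 * m := by simp [mul_comm]
    omega
  have hkchoice : ∃ k : Fin m, Q₀ (v, k) ≤ 1 ∧
      (Q₀ (v, k) = 1 ∨ ∀ k' : Fin m, Q₀ (v, k') ≠ 1) := by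
    by_cases h1 : ∃ k : Fin m, Q₀ (v, k) = 1
    · obtain ⟨k, hk⟩ := h1; exact ⟨k, by omega, Or.inl hk⟩
    · push_neg at h1
      obtain ⟨k, hk⟩ := hex
      exact ⟨k, hk, Or.inr h1⟩
  obtain ⟨k, hk1, hkcase⟩ := hkchoice
  exact ⟨_, ⟨(u, j), (v, k), Or.inl hadj, by rw [hj], rfl⟩,
    move_rep hrep huv h2 hj hk1 hkcase⟩

lemma reach_sim {m : ℕ} {G : SimpleGraph V} {D₀ D' : V → ℕ} {Q₀ : V × Fin m → ℕ}
    (hrep : PRep m D₀ Q₀) (hsz : distSize D₀ ≤ 2 * m) (h : PebblingReaches G D₀ D') :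
    ∃ Q', PebblingReaches (lexProd G (⊤ : SimpleGraph (Fin m))) Q₀ Q' ∧ PRep m D' Q' := by
  induction h with
  | refl => exact ⟨Q₀, Relation.ReflTransGen.refl, hrep⟩
  | tail hab hstep ih =>
      obtain ⟨Q', hQ, hrep'⟩ := ih
      have hsz' : distSize _ ≤ 2 * m := le_trans (pebblingReaches_size hab) hsz
      obtain ⟨Q₁, hstep', hrep₁⟩ := step_sim hrep' hsz' hstep
      exact ⟨Q₁, hQ.tail hstep', hrep₁⟩

lemma extract {m : ℕ} (G : SimpleGraph V) {D' : V → ℕ} {Q' : V × Fin m → ℕ}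
    (hrep : PRep m D' Q') {g : V} (i : Fin m) (h2 : 2 ≤ D' g) :
    ∃ Q'', PebblingReaches (lexProd G (⊤ : SimpleGraph (Fin m))) Q' Q'' ∧ 1 ≤ Q'' (g, i) := by
  obtain ⟨j, hj⟩ := pair_exists hrep h2
  by_cases hji : j = i
  · exact ⟨Q', Relation.ReflTransGen.refl, by rw [← hji, hj]; omega⟩
  · refine ⟨_, Relation.ReflTransGen.single
      ⟨(g, j), (g, i), Or.inr ⟨rfl, hji⟩, by rw [hj], rfl⟩, ?_⟩
    rw [Function.update_self]
    omega

lemma zero_col {m : ℕ} {G : SimpleGraph V} {D₀ D' : V → ℕ} {g : V} (i : Fin m)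
    (h : PebblingReaches G D₀ D') (hg' : 1 ≤ D' g) :
    ∀ Q₀ : V × Fin m → ℕ, PRep m D₀ Q₀ → distSize D₀ ≤ 2 * m → D₀ g = 0 →
    ∃ Q'', PebblingReaches (lexProd G (⊤ : SimpleGraph (Fin m))) Q₀ Q'' ∧ 1 ≤ Q'' (g, i) := by
  induction h using Relation.ReflTransGen.head_induction_on with
  | refl => intro Q₀ hrep hsz h0; omega
  | @head A C hstep htail ih =>
      intro Q₀ hrep hsz h0
      obtain ⟨u, v, hadj, h2, rfl⟩ := hstep
      by_cases hvg : v = g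
      · subst hvg
        obtain ⟨j, hj⟩ := pair_exists hrep h2
        refine ⟨_, Relation.ReflTransGen.single
          ⟨(u, j), (v, i), Or.inl hadj, by rw [hj], rfl⟩, ?_⟩
        rw [Function.update_self]
        omega
      · have hug : u ≠ g := by intro h'; rw [h'] at h2; omega
        have hCg : Function.update (Function.update A u (A u - 2)) v (A v + 1) g = 0 := by
          rw [Function.update_of_ne (Ne.symm hvg), Function.update_of_ne (Ne.symm hug)]
          exact h0
        have hstep0 : PebblingStep G A
            (Function.update (Function.update A u (A u - 2)) v (A v + 1)) :=
          ⟨u, v, hadj, h2, rfl⟩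
        have hszC : distSize (Function.update (Function.update A u (A u - 2)) v (A v + 1))
            ≤ 2 * m := by
          have := pebblingStep_size hstep0
          omega
        obtain ⟨Q₁, hstep', hrep₁⟩ := step_sim hrep hsz hstep0
        obtain ⟨Q'', hreach, hval⟩ := ih Q₁ hrep₁ hszC hCg
        exact ⟨Q'', hreach.head hstep', hval⟩

lemma init_col {m : ℕ} {Dg : ℕ} (hlt : Dg < 2 * m) :
    ∑ j : Fin m, (if (j : ℕ) = 0 ∧ Odd Dg then 1
      else if 1 ≤ (j : ℕ) ∧ (j : ℕ) ≤ Dg / 2 then 2 else 0) = Dg := by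
  have hm : 1 ≤ m := by omega
  have hq : Dg / 2 < m := by omega
  rw [Fin.sum_univ_eq_sum_range
    (fun n => if n = 0 ∧ Odd Dg then 1 else if 1 ≤ n ∧ n ≤ Dg / 2 then 2 else 0) m]
  have hsplit : ∀ n ∈ Finset.range m,
      (if n = 0 ∧ Odd Dg then 1 else if 1 ≤ n ∧ n ≤ Dg / 2 then 2 else 0)
      = (if n = 0 ∧ Odd Dg then 1 else 0)
        + (if n ∈ Finset.Ico 1 (Dg / 2 + 1) then 2 else 0) := by
    intro n _
    by_cases h1 : n = 0 ∧ Odd Dg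
    · simp [h1, h1.1]
    · simp [h1, Finset.mem_Ico, Nat.lt_succ_iff]
  rw [Finset.sum_congr rfl hsplit, Finset.sum_add_distrib]
  have hS1 : ∑ n ∈ Finset.range m, (if n = 0 ∧ Odd Dg then 1 else 0)
      = if Odd Dg then 1 else 0 := by
    by_cases ho : Odd Dg
    · simp only [ho, and_true]
      rw [Finset.sum_ite_eq' (Finset.range m) 0 (fun _ => 1)]
      have : (0 : ℕ) ∈ Finset.range m := Finset.mem_range.mpr (by omega)
      simp [this, ho]
    · simp [ho]
  have hS2 : ∑ n ∈ Finset.range m, (if n ∈ Finset.Ico 1 (Dg / 2 + 1) then 2 else 0)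
      = 2 * (Dg / 2) := by
    rw [Finset.sum_ite_mem]
    have hint : Finset.range m ∩ Finset.Ico 1 (Dg / 2 + 1) = Finset.Ico 1 (Dg / 2 + 1) := by
      ext n
      simp only [Finset.mem_inter, Finset.mem_range, Finset.mem_Ico]
      omega
    rw [hint, Finset.sum_const, Nat.card_Ico, smul_eq_mul]
    omega
  rw [hS1, hS2]
  rcases Nat.even_or_odd Dg with he | ho
  · have : ¬ Odd Dg := by simpa [Nat.even_iff, Nat.odd_iff] using he
    simp only [this, if_false]
    have := Nat.even_iff.mp he
    omega
  · have h1 := Nat.odd_iff.mp ho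
    simp only [ho, if_true]
    omega

lemma init_rep {m : ℕ} (D : V → ℕ) (hlt : ∀ g, D g < 2 * m) :
    PRep m D (fun p : V × Fin m => if (p.2 : ℕ) = 0 ∧ Odd (D p.1) then 1
      else if 1 ≤ (p.2 : ℕ) ∧ (p.2 : ℕ) ≤ D p.1 / 2 then 2 else 0) := by
  refine ⟨fun g => init_col (hlt g), fun p => by dsimp only; split_ifs <;> omega, fun g => ?_⟩
  rw [Finset.card_le_one]
  have hval : ∀ j : Fin m, ((if (j : ℕ) = 0 ∧ Odd (D g) then 1
      else if 1 ≤ (j : ℕ) ∧ (j : ℕ) ≤ D g / 2 then 2 else 0) = 1) → (j : ℕ) = 0 := by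
    intro j h
    split_ifs at h with h1 h2
    · exact h1.1
    · omega
  intro a ha b hb
  rw [Finset.mem_filter] at ha hb
  exact Fin.ext ((hval a ha.2).trans (hval b hb.2).symm)

end Aux

theorem lexProd_lift_distribution {V : Type*} [Fintype V] [DecidableEq V]
    (G : SimpleGraph V) (hconn : G.Connected) (hcard : 2 ≤ Fintype.card V)
    (m : ℕ) (D : V → ℕ) (hsolv : Solvable G D) (hsize : distSize D ≤ 2 * m)
    (hone : ∀ g, D g = 1 → KReachable G D 2 g) (hlt : ∀ g, D g < 2 * m) :
    Solvable (lexProd G (⊤ : SimpleGraph (Fin m)))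
      (fun p => if p.2.val = 0 ∧ Odd (D p.1) then 1
        else if 1 ≤ p.2.val ∧ p.2.val ≤ D p.1 / 2 then 2 else 0) ∧
    (∀ p : V × Fin m, (fun p : V × Fin m => if p.2.val = 0 ∧ Odd (D p.1) then 1
        else if 1 ≤ p.2.val ∧ p.2.val ≤ D p.1 / 2 then 2 else 0) p ≤ 2) ∧
    distSize (fun p : V × Fin m => if p.2.val = 0 ∧ Odd (D p.1) then 1
        else if 1 ≤ p.2.val ∧ p.2.val ≤ D p.1 / 2 then 2 else 0) = distSize D := by


  classical
  have hrepQ : PRep m D (fun p : V × Fin m => if p.2.val = 0 ∧ Odd (D p.1) then 1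
      else if 1 ≤ p.2.val ∧ p.2.val ≤ D p.1 / 2 then 2 else 0) := init_rep D hlt
  refine ⟨?_, fun p => by dsimp only; split_ifs <;> omega, ?_⟩
  · intro p
    obtain ⟨g, i⟩ := p
    rcases Nat.lt_or_ge (D g) 2 with hlt2 | h2
    · by_cases h0 : D g = 0
      · obtain ⟨D', hreach, h1'⟩ := hsolv g
        exact zero_col i hreach h1' _ hrepQ hsize h0
      · have h1 : D g = 1 := by omega
        obtain ⟨D'', hreach, h2'⟩ := hone g h1
        obtain ⟨Q', hr1, hrep'⟩ := reach_sim hrepQ hsize hreach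
        obtain ⟨Q'', hr2, hv⟩ := extract G hrep' i h2'
        exact ⟨Q'', hr1.trans hr2, hv⟩
    · obtain ⟨Q'', hr, hv⟩ := extract G hrepQ i h2
      exact ⟨Q'', hr, hv⟩
  · rw [distSize, distSize, Fintype.sum_prod_type]
    exact Finset.sum_congr rfl (fun g _ => init_col (hlt g))
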